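/- With g = h ⋉_π V constructed from a LCS Lie algebra (h, ω, θ), a symplectic vector space (V, ω₀) with dim V ≥ 2, and a LCS representation π, the LCS structure (ω̃, θ̃) on g is non-exact: there is no 1-form η ∈ g* with ω̃ = dη - θ̃ ∧ η. (Indeed, the restriction to V of any d_θ̃-exact 2-form vanishes, while ω₀ is non-degenerate.) -/

import Mathlib

/-- The LCS structure `(ω̃, θ̃)` on `g = h ⋉_π V` (with `dim V ≥ 2`) is non-exact:
there is no 1-form `η` on `g` with `ω̃ = dη - θ̃ ∧ η`. -/
theorem semidirect_non_exact {H V : Type*} [LieRing H] [LieAlgebra ℝ H]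
    [AddCommGroup V] [Module ℝ V] (hdimV : 2 ≤ Module.finrank ℝ V)
    (ω : H →ₗ[ℝ] H →ₗ[ℝ] ℝ) (θ : H →ₗ[ℝ] ℝ)
    (hskew : ∀ X Y : H, ω X Y = - ω Y X)
    (hnd : ∀ X : H, X ≠ 0 → ∃ Y : H, ω X Y ≠ 0)
    (hclosed : ∀ X Y : H, θ ⁅X, Y⁆ = 0)
    (hdω : ∀ X Y Z : H, -ω ⁅X, Y⁆ Z + ω ⁅X, Z⁆ Y - ω ⁅Y, Z⁆ X
        = θ X * ω Y Z - θ Y * ω X Z + θ Z * ω X Y)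
    (ω₀ : V →ₗ[ℝ] V →ₗ[ℝ] ℝ)
    (hskew₀ : ∀ u v : V, ω₀ u v = - ω₀ v u)
    (hnd₀ : ∀ u : V, u ≠ 0 → ∃ v : V, ω₀ u v ≠ 0)
    (π : H →ₗ[ℝ] Module.End ℝ V)
    (hπ : ∀ X Y : H, π ⁅X, Y⁆ = π X * π Y - π Y * π X)
    (ρ : H → Module.End ℝ V)
    (hdecomp : ∀ X : H, π X = (-(θ X / 2)) • (1 : Module.End ℝ V) + ρ X)
    (hsp : ∀ (X : H) (Y Z : V), ω₀ (ρ X Y) Z + ω₀ Y (ρ X Z) = 0) :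
    (let b : H × V → H × V → H × V :=
       fun P Q => (⁅P.1, Q.1⁆, π P.1 Q.2 - π Q.1 P.2)
     let Ω : H × V → H × V → ℝ := fun P Q => ω P.1 Q.1 + ω₀ P.2 Q.2
     let Θ : H × V → ℝ := fun P => θ P.1
     ¬ ∃ η : H × V →ₗ[ℝ] ℝ, ∀ P Q : H × V,
        Ω P Q = -η (b P Q) - (Θ P * η Q - Θ Q * η P)) := by
  intro b Ω Θ
  rintro ⟨η, hη⟩
  -- V is nontrivial since finrank ≥ 2
  have hnt : Nontrivial V := by
    by_contra h
    rw [not_nontrivial_iff_subsingleton] at h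
    have := Module.finrank_zero_of_subsingleton (R := ℝ) (M := V)
    omega
  obtain ⟨u, hu⟩ := exists_ne (0 : V)
  obtain ⟨v, hv⟩ := hnd₀ u hu
  have h0 := hη (0, u) (0, v)
  simp only [b, Ω, Θ] at h0
  simp at h0
  exact hv (by rw [h0, Prod.mk_zero_zero, map_zero, neg_zero])
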